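/- Along the imitation dynamics ẋ_m^k given by equation (8), the function V(x) = −Σ_{m=1}^M ∫_{−∞}^{Σ_k z_k x_m^k} θ_m B_m g(s) ds is non-increasing: dV/dt ≤ 0, assuming Q satisfies (u−v)(Q(u−v) − Q(v−u)) ≥ 0 for all u, v. -/

import Mathlib

open Finset

lemma quad_swap {K M : Type*} [Fintype K] [Fintype M] (f : M → M → K → K → ℝ) :
    ∑ m, ∑ i, ∑ k, ∑ k', f m i k k' = ∑ m, ∑ i, ∑ k, ∑ k', f i m k' k := by
  rw [Finset.sum_comm]
  exact Finset.sum_congr rfl fun m _ => Finset.sum_congr rfl fun i _ => Finset.sum_comm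

lemma key_nonneg {K M : Type*} [Fintype K] [Fintype M]
    (a : M → M → K → K → ℝ) (ha : ∀ m i k k', 0 ≤ a m i k k')
    (hsym : ∀ m i k k', a i m k' k = a m i k k')
    (u : M → ℝ) (Q : ℝ → ℝ)
    (hQ : ∀ p q : ℝ, 0 ≤ (p - q) * (Q (p - q) - Q (q - p))) :
    0 ≤ ∑ m, ∑ i, ∑ k, ∑ k', a m i k k' * (u m * (Q (u m - u i) - Q (u i - u m))) := by
  set S := ∑ m, ∑ i, ∑ k, ∑ k', a m i k k' * (u m * (Q (u m - u i) - Q (u i - u m))) with hS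
  have hswap : S = ∑ m, ∑ i, ∑ k, ∑ k',
      a m i k k' * (u i * (Q (u i - u m) - Q (u m - u i))) := by
    rw [hS, quad_swap (fun m i k k' => a m i k k' * (u m * (Q (u m - u i) - Q (u i - u m))))]
    exact sum_congr rfl fun m _ => sum_congr rfl fun i _ => sum_congr rfl fun k _ =>
      sum_congr rfl fun k' _ => by rw [hsym]
  have h2 : S + S = ∑ m, ∑ i, ∑ k, ∑ k',
      a m i k k' * ((u m - u i) * (Q (u m - u i) - Q (u i - u m))) := by
    nth_rewrite 2 [hswap]
    rw [hS]
    simp only [← Finset.sum_add_distrib]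
    exact sum_congr rfl fun m _ => sum_congr rfl fun i _ => sum_congr rfl fun k _ =>
      sum_congr rfl fun k' _ => by ring
  have hpos : 0 ≤ S + S := by
    rw [h2]
    exact sum_nonneg fun m _ => sum_nonneg fun i _ => sum_nonneg fun k _ =>
      sum_nonneg fun k' _ => mul_nonneg (ha _ _ _ _) (hQ _ _)
  linarith


/-- Lyapunov property of the imitation dynamics (Theorem 2's key step): along a
trajectory `x(t)` of the imitation dynamics (8), with cluster sizes `z_k > 0`,
symmetric communication neighborhoods `C` with identical normalizing sums for
communicating clusters, nonnegative population states, positive `c_m = θ_m B_m`,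
positive continuous grabbing function `g` with antiderivatives
`F_m' (s) = c_m g(s)`, and `Q` satisfying
`(u−v)(Q(u−v) − Q(v−u)) ≥ 0`, the function
`V(t) = −Σ_m F_m(Σ_k z_k x_m^k(t))` is non-increasing: any derivative of `V`
is `≤ 0`. -/
theorem imitation_lyapunov {K M : Type*} [Fintype K] [Fintype M]
    (z : K → ℝ) (hz : ∀ k, 0 < z k)
    (C : K → Finset K) (hself : ∀ k, k ∈ C k)
    (hsymm : ∀ k k', k' ∈ C k ↔ k ∈ C k')
    (hnorm : ∀ k k', k' ∈ C k → ∑ l ∈ C k, z l = ∑ l ∈ C k', z l)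
    (c : M → ℝ) (hc : ∀ m, 0 < c m)
    (g : ℝ → ℝ) (hgcont : Continuous g) (hgpos : ∀ s, 0 < g s)
    (F : M → ℝ → ℝ) (hF : ∀ m s, HasDerivAt (F m) (c m * g s) s)
    (Q : ℝ → ℝ) (hQrange : ∀ s, Q s ∈ Set.Icc (0 : ℝ) 1)
    (hQ : ∀ u v : ℝ, 0 ≤ (u - v) * (Q (u - v) - Q (v - u)))
    (x : ℝ → K → M → ℝ) (hxnonneg : ∀ t k m, 0 ≤ x t k m)
    (U : ℝ → M → ℝ) (hU : ∀ t m, U t m = c m * g (∑ k, z k * x t k m))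
    (hdyn : ∀ t k m, HasDerivAt (fun t => x t k m)
      ((∑ i, x t k i * ∑ k' ∈ C k, (z k' / ∑ l ∈ C k, z l) * x t k' m
          * Q (U t m - U t i)) -
        x t k m * ∑ i, ∑ k' ∈ C k, (z k' / ∑ l ∈ C k, z l) * x t k' i
          * Q (U t i - U t m)) t) :
    ∀ t d : ℝ,
      HasDerivAt (fun t => -∑ m, F m (∑ k, z k * x t k m)) d t → d ≤ 0 := by
  intro t d hd
  classical
  set y : K → M → ℝ := x t with hy
  set u : M → ℝ := U t with hu
  set N : K → ℝ := fun k => ∑ l ∈ C k, z l with hN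
  have hNpos : ∀ k, 0 < N k := fun k => Finset.sum_pos (fun l _ => hz l) ⟨k, hself k⟩
  -- the velocity of x at time t
  set w : K → M → ℝ := fun k m =>
    (∑ i, y k i * ∑ k' ∈ C k, (z k' / N k) * y k' m * Q (u m - u i)) -
      y k m * ∑ i, ∑ k' ∈ C k, (z k' / N k) * y k' i * Q (u i - u m) with hw
  have hS : ∀ m : M, HasDerivAt (fun t => ∑ k, z k * x t k m) (∑ k, z k * w k m) t :=
    fun m => HasDerivAt.fun_sum fun k _ => (hdyn t k m).const_mul (z k)
  have hV : HasDerivAt (fun t => -∑ m, F m (∑ k, z k * x t k m))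
      (-∑ m, c m * g (∑ k, z k * y k m) * (∑ k, z k * w k m)) t :=
    (HasDerivAt.fun_sum fun m _ => (hF m (∑ k, z k * y k m)).comp t (hS m)).neg
  have hd' : d = -∑ m, c m * g (∑ k, z k * y k m) * (∑ k, z k * w k m) := hd.unique hV
  rw [hd', neg_nonpos]
  have hcg : ∀ m, c m * g (∑ k, z k * y k m) = u m := fun m => (hU t m).symm
  simp only [hcg]
  -- the symmetric nonnegative kernel
  set a : M → M → K → K → ℝ := fun m i k k' =>
    if k' ∈ C k then z k * (z k' / N k) * y k i * y k' m else 0 with ha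
  have hanonneg : ∀ m i k k', 0 ≤ a m i k k' := by
    intro m i k k'
    rw [ha]
    dsimp only
    split_ifs with h
    · exact mul_nonneg (mul_nonneg (mul_nonneg (hz k).le
        (div_nonneg (hz k').le (hNpos k).le)) (hxnonneg t k i)) (hxnonneg t k' m)
    · exact le_refl 0
  have hasym : ∀ m i k k', a i m k' k = a m i k k' := by
    intro m i k k'
    rw [ha]
    dsimp only
    rw [if_congr (hsymm k' k) rfl rfl]
    split_ifs with h
    · have h2 : N k = N k' := hnorm k k' h
      rw [h2]
      ring
    · rfl
  -- rewrite the sum into kernel form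
  have hE : ∑ m, u m * ∑ k, z k * w k m
      = ∑ m, ∑ i, ∑ k, ∑ k', a m i k k' * (u m * (Q (u m - u i) - Q (u i - u m))) := by
    have step1 : ∀ m k, u m * (z k * w k m)
        = ∑ i, ∑ k', (a m i k k' * (u m * Q (u m - u i))
            - (if k' ∈ C k then z k * (z k' / N k) * y k' i * y k m else 0)
              * (u m * Q (u i - u m))) := by
      intro m k
      rw [hw]
      dsimp only
      simp only [Finset.sum_sub_distrib]
      rw [mul_sub, mul_sub]
      congr 1
      · -- first piece
        simp only [Finset.mul_sum]
        refine sum_congr rfl fun i _ => ?_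
        rw [ha]
        dsimp only
        simp only [ite_mul, zero_mul]
        rw [Finset.sum_ite_mem, Finset.univ_inter]
        exact sum_congr rfl fun k' _ => by ring
      · -- second piece
        simp only [Finset.mul_sum]
        refine sum_congr rfl fun i _ => ?_
        simp only [ite_mul, zero_mul]
        rw [Finset.sum_ite_mem, Finset.univ_inter]
        exact sum_congr rfl fun k' _ => by ring
    calc ∑ m, u m * ∑ k, z k * w k m
        = ∑ m, ∑ k, ∑ i, ∑ k', (a m i k k' * (u m * Q (u m - u i))
            - (if k' ∈ C k then z k * (z k' / N k) * y k' i * y k m else 0)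
              * (u m * Q (u i - u m))) := by
          refine sum_congr rfl fun m _ => ?_
          rw [Finset.mul_sum]
          exact sum_congr rfl fun k _ => step1 m k
      _ = ∑ m, ∑ i, ∑ k, ∑ k', (a m i k k' * (u m * Q (u m - u i))
            - (if k' ∈ C k then z k * (z k' / N k) * y k' i * y k m else 0)
              * (u m * Q (u i - u m))) := by
          exact sum_congr rfl fun m _ => Finset.sum_comm
      _ = ∑ m, ∑ i, (∑ k, ∑ k', a m i k k' * (u m * Q (u m - u i))
            - ∑ k, ∑ k', (if k' ∈ C k then z k * (z k' / N k) * y k' i * y k m else 0)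
              * (u m * Q (u i - u m))) := by
          simp only [Finset.sum_sub_distrib]
      _ = ∑ m, ∑ i, (∑ k, ∑ k', a m i k k' * (u m * Q (u m - u i))
            - ∑ k, ∑ k', a m i k k' * (u m * Q (u i - u m))) := by
          refine sum_congr rfl fun m _ => sum_congr rfl fun i _ => ?_
          congr 1
          rw [Finset.sum_comm]
          refine sum_congr rfl fun k _ => sum_congr rfl fun k' _ => ?_
          congr 1
          rw [ha]
          dsimp only
          rw [if_congr (hsymm k' k) rfl rfl]
          split_ifs with h
          · have h2 : N k = N k' := hnorm k k' h
            rw [h2]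
            ring
          · rfl
      _ = ∑ m, ∑ i, ∑ k, ∑ k', a m i k k' * (u m * (Q (u m - u i) - Q (u i - u m))) := by
          refine sum_congr rfl fun m _ => sum_congr rfl fun i _ => ?_
          rw [← Finset.sum_sub_distrib]
          refine sum_congr rfl fun k _ => ?_
          rw [← Finset.sum_sub_distrib]
          exact sum_congr rfl fun k' _ => by ring
  calc (0:ℝ) ≤ ∑ m, ∑ i, ∑ k, ∑ k', a m i k k' * (u m * (Q (u m - u i) - Q (u i - u m))) :=
        key_nonneg a hanonneg hasym u Q hQ
    _ = ∑ m, u m * ∑ k, z k * w k m := hE.symm
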